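/- Tensor rank bounds the κ-vector: let A = (A_1, …, A_e) be a tuple of d×d matrices over k, and suppose there exist r ≥ 0, vectors u_1, …, u_r, v_1, …, v_r ∈ k^d, and scalars c_{α,i} ∈ k such that A_i = Σ_{α=1}^r c_{α,i} u_α v_αᵗ for every 1 ≤ i ≤ e (i.e., the associated 3-tensor in k^e ⊗ k^d ⊗ k^d is a sum of r pure tensors). Then κ_j(A) ≤ r·C(e−1, j) for every 0 ≤ j ≤ e−1. -/

import Mathlib

open Matrix

/-- The matrix of the map `ψ_j(A) : k^d ⊗ Λ^j(k^e) → k^d ⊗ Λ^{j+1}(k^e)` determined by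
`ψ_j(A)(u ⊗ E) = Σ_i (A_i u) ⊗ (E ∧ e_i)`, written in the standard bases: basis vectors of
`k^d ⊗ Λ^j(k^e)` are indexed by pairs `(p, S)` with `p : Fin d` and `S` a `j`-element subset
of `Fin e`, and `e_S ∧ e_i = (-1)^{#{s ∈ S | i < s}} e_{insert i S}` if `i ∉ S`, else `0`. -/
noncomputable def psiMatrix {R : Type*} [CommRing R] (d e : ℕ)
    (A : Fin e → Matrix (Fin d) (Fin d) R) (j : ℕ) :
    Matrix (Fin d × {T : Finset (Fin e) // T.card = j + 1})
      (Fin d × {S : Finset (Fin e) // S.card = j}) R :=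
  Matrix.of fun qT pS =>
    ∑ i : Fin e,
      if i ∉ pS.2.1 ∧ qT.2.1 = insert i pS.2.1 then
        (-1 : R) ^ (pS.2.1.filter (fun s => i < s)).card * A i qT.1 pS.1
      else 0

/-- `κ_j(A)` is the rank of `ψ_j(A)`. -/
noncomputable def kappa {R : Type*} [CommRing R] (d e : ℕ)
    (A : Fin e → Matrix (Fin d) (Fin d) R) (j : ℕ) : ℕ :=
  (psiMatrix d e A j).rank

section Aux

variable {k : Type*} [Field k] {e : ℕ}

/-- number of elements of `S` greater than `i` -/
def fcount (i : Fin e) (S : Finset (Fin e)) : ℕ := (S.filter (fun s => i < s)).card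

lemma fcount_insert (x y : Fin e) (Z : Finset (Fin e)) (hy : y ∉ Z) :
    fcount x (insert y Z) = fcount x Z + (if x < y then 1 else 0) := by
  unfold fcount
  rw [Finset.filter_insert]
  split_ifs with h
  · rw [Finset.card_insert_of_notMem (fun hmem => hy (Finset.mem_of_mem_filter y hmem))]
  · rw [add_zero]

lemma sign_cancel (S : Finset (Fin e)) (i0 m i : Fin e) (hi0 : i0 ∈ S)
    (hm : m ∉ S) (hi : i ∉ S) (hmi : m ≠ i) :
    ((-1 : k) ^ fcount m S * (-1 : k) ^ fcount i0 (insert m (S.erase i0)) *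
      (-1 : k) ^ fcount i (insert m (S.erase i0))) =
    -((-1 : k) ^ fcount i S * (-1 : k) ^ fcount i0 (insert i (S.erase i0)) *
      (-1 : k) ^ fcount m (insert i (S.erase i0))) := by
  have hmE : m ∉ S.erase i0 := fun h => hm (Finset.mem_of_mem_erase h)
  have hiE : i ∉ S.erase i0 := fun h => hi (Finset.mem_of_mem_erase h)
  have hi0E : i0 ∉ S.erase i0 := Finset.notMem_erase _ _
  have hmS : fcount m S = fcount m (S.erase i0) + (if m < i0 then 1 else 0) := by
    conv_lhs => rw [← Finset.insert_erase hi0]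
    exact fcount_insert m i0 _ hi0E
  have hiS : fcount i S = fcount i (S.erase i0) + (if i < i0 then 1 else 0) := by
    conv_lhs => rw [← Finset.insert_erase hi0]
    exact fcount_insert i i0 _ hi0E
  rw [fcount_insert i0 m _ hmE, fcount_insert i m _ hmE,
      fcount_insert i0 i _ hiE, fcount_insert m i _ hiE, hmS, hiS]
  have hmi0 : m ≠ i0 := fun h => hm (h ▸ hi0)
  have hii0 : i ≠ i0 := fun h => hi (h ▸ hi0)
  rcases lt_or_gt_of_ne hmi0 with h1 | h1 <;> rcases lt_or_gt_of_ne hii0 with h2 | h2 <;>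
    rcases lt_or_gt_of_ne hmi with h3 | h3 <;>
      simp [h1, h2, h3, asymm h1, asymm h2, asymm h3, pow_add] <;> ring

/-- the column of the "wedge with `Σ c i • e i`" matrix at `S`, evaluated at row `T`. -/
def wcol (c : Fin e → k) (S T : Finset (Fin e)) : k :=
  ∑ i : Fin e, if i ∉ S ∧ T = insert i S then (-1 : k) ^ fcount i S * c i else 0

lemma wcol_key (c : Fin e → k) (i0 : Fin e) (S T : Finset (Fin e)) (hi0 : i0 ∈ S) :
    c i0 * wcol c S T =
      ∑ m ∈ Sᶜ, ((-1 : k) ^ fcount m S * (-1 : k) ^ fcount i0 (insert m (S.erase i0)) * c m)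
        * wcol c (insert m (S.erase i0)) T := by
  classical
  set E := S.erase i0 with hE
  set coef : Fin e → k :=
    fun m => (-1 : k) ^ fcount m S * (-1 : k) ^ fcount i0 (insert m E) * c m with hcoef
  set h : Fin e → Fin e → k := fun m i =>
    if i ∉ insert m E ∧ T = insert i (insert m E) then
      coef m * ((-1 : k) ^ fcount i (insert m E) * c i) else 0 with hh
  have hsubC : Sᶜ ⊆ Finset.univ.erase i0 := by
    intro x hx
    exact Finset.mem_erase.2 ⟨fun hxx => (Finset.mem_compl.1 hx) (hxx ▸ hi0), Finset.mem_univ x⟩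
  have step1 : ∀ m ∈ Sᶜ, (∑ i : Fin e, h m i) = h m i0 + ∑ i ∈ Sᶜ, h m i := by
    intro m hm
    rw [← Finset.add_sum_erase Finset.univ (h m) (Finset.mem_univ i0)]
    congr 1
    refine (Finset.sum_subset hsubC ?_).symm
    intro x hx hxn
    have hxS : x ∈ S := by
      by_contra hxS
      exact hxn (Finset.mem_compl.2 hxS)
    have hxi0 : x ≠ i0 := (Finset.mem_erase.1 hx).1
    have : x ∈ insert m E := Finset.mem_insert_of_mem (Finset.mem_erase.2 ⟨hxi0, hxS⟩)
    simp only [hh]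
    rw [if_neg]
    intro hcond
    exact hcond.1 this
  have step2 : ∀ m ∈ Sᶜ, h m i0 = if T = insert m S then (-1 : k) ^ fcount m S * c m * c i0 else 0 := by
    intro m hm
    have hmS : m ∉ S := Finset.mem_compl.1 hm
    have hmi0 : m ≠ i0 := fun hh' => hmS (hh' ▸ hi0)
    have h1 : i0 ∉ insert m E := by
      intro hmem
      rcases Finset.mem_insert.1 hmem with h' | h'
      · exact hmi0 h'.symm
      · exact (Finset.notMem_erase i0 S) h'
    have h2 : insert i0 (insert m E) = insert m S := by
      rw [Finset.insert_comm, hE, Finset.insert_erase hi0]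
    simp only [hh, h1, not_false_iff, true_and, h2]
    split_ifs with hT
    · have hsq : ((-1 : k) ^ fcount i0 (insert m E)) * ((-1 : k) ^ fcount i0 (insert m E)) = 1 := by
        rw [← mul_pow]; norm_num
      simp only [hcoef]
      linear_combination ((-1 : k) ^ fcount m S * c m * c i0) * hsq
    · rfl
  have step3 : (∑ m ∈ Sᶜ, ∑ i ∈ Sᶜ, h m i) = 0 := by
    rw [← Finset.sum_product']
    refine Finset.sum_involution (fun a _ => a.swap) ?_ ?_ ?_ ?_
    · rintro ⟨m, i⟩ ha
      have hmS : m ∉ S := Finset.mem_compl.1 (Finset.mem_product.1 ha).1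
      have hiS : i ∉ S := Finset.mem_compl.1 (Finset.mem_product.1 ha).2
      by_cases hmi : m = i
      · subst hmi
        have : h m m = 0 := by
          simp only [hh]
          rw [if_neg]
          intro hcond
          exact hcond.1 (Finset.mem_insert_self m E)
        simp only [Prod.swap]
        rw [this, add_zero]
      · by_cases hcond : i ∉ insert m E ∧ T = insert i (insert m E)
        · have hcond' : m ∉ insert i E ∧ T = insert m (insert i E) := by
            constructor
            · intro hmem
              rcases Finset.mem_insert.1 hmem with h' | h'
              · exact hmi h'
              · exact hmS (Finset.mem_of_mem_erase h')
            · rw [Finset.insert_comm]; exact hcond.2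
          simp only [hh, Prod.swap]
          rw [if_pos hcond, if_pos hcond', hcoef]
          have hsign := sign_cancel (k := k) S i0 m i hi0 hmS hiS hmi
          rw [hE]
          linear_combination (c m * c i) * hsign
        · have hcond' : ¬(m ∉ insert i E ∧ T = insert m (insert i E)) := by
            intro hc
            refine hcond ⟨?_, ?_⟩
            · intro hmem
              rcases Finset.mem_insert.1 hmem with h' | h'
              · exact hmi h'.symm
              · exact hiS (Finset.mem_of_mem_erase h')
            · rw [Finset.insert_comm]; exact hc.2
          simp only [hh, Prod.swap]
          rw [if_neg hcond, if_neg hcond', add_zero]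
    · rintro ⟨m, i⟩ ha hne
      intro hsw
      have : m = i := (Prod.ext_iff.1 hsw).2
      subst this
      apply hne
      simp only [hh]
      rw [if_neg]
      intro hcond
      exact hcond.1 (Finset.mem_insert_self m E)
    · rintro ⟨m, i⟩ ha
      have h' := Finset.mem_product.1 ha
      exact Finset.mem_product.2 ⟨h'.2, h'.1⟩
    · rintro ⟨m, i⟩ ha
      rfl
  have expand : ∀ m ∈ Sᶜ,
      coef m * wcol c (insert m E) T = ∑ i : Fin e, h m i := by
    intro m hm
    rw [wcol, Finset.mul_sum]
    refine Finset.sum_congr rfl fun i _ => ?_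
    simp only [hh]
    split_ifs with hcnd
    · ring
    · ring
  have lhs_eq : (∑ m ∈ Sᶜ, h m i0) = c i0 * wcol c S T := by
    rw [wcol, Finset.mul_sum]
    rw [Finset.sum_congr rfl step2]
    rw [show (∑ i : Fin e, c i0 * if i ∉ S ∧ T = insert i S then (-1:k) ^ fcount i S * c i else 0)
        = ∑ i : Fin e, if i ∈ Sᶜ then (if T = insert i S then (-1:k) ^ fcount i S * c i * c i0 else 0) else 0 from ?_]
    · rw [Finset.sum_ite_mem, Finset.univ_inter]
    · refine Finset.sum_congr rfl fun i _ => ?_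
      by_cases h1 : i ∈ Sᶜ
      · have h2 : i ∉ S := Finset.mem_compl.1 h1
        rw [if_pos h1]
        by_cases h3 : T = insert i S
        · rw [if_pos ⟨h2, h3⟩, if_pos h3]; ring
        · rw [if_neg (fun hc => h3 hc.2), if_neg h3, mul_zero]
      · have h2 : i ∈ S := by
          by_contra h2
          exact h1 (Finset.mem_compl.2 h2)
        rw [if_neg h1, if_neg (fun hc => hc.1 h2), mul_zero]
  calc c i0 * wcol c S T = (∑ m ∈ Sᶜ, h m i0) + (∑ m ∈ Sᶜ, ∑ i ∈ Sᶜ, h m i) := by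
        rw [lhs_eq, step3, add_zero]
    _ = ∑ m ∈ Sᶜ, (h m i0 + ∑ i ∈ Sᶜ, h m i) := by rw [Finset.sum_add_distrib]
    _ = ∑ m ∈ Sᶜ, ∑ i : Fin e, h m i := by
        refine Finset.sum_congr rfl fun m hm => (step1 m hm).symm
    _ = ∑ m ∈ Sᶜ, coef m * wcol c (insert m E) T := by
        refine Finset.sum_congr rfl fun m hm => (expand m hm).symm

end Aux

open Module Submodule in
lemma matrix_rank_add_le {k : Type*} [Field k] {m n : Type*} [Fintype n] [Fintype m]
    (A B : Matrix m n k) : (A + B).rank ≤ A.rank + B.rank := by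
  classical
  unfold Matrix.rank
  rw [Matrix.mulVecLin_add]
  have hle : LinearMap.range (A.mulVecLin + B.mulVecLin) ≤
      LinearMap.range A.mulVecLin ⊔ LinearMap.range B.mulVecLin := by
    rintro x ⟨y, rfl⟩
    exact Submodule.add_mem_sup ⟨y, rfl⟩ ⟨y, rfl⟩
  calc finrank k (LinearMap.range (A.mulVecLin + B.mulVecLin))
      ≤ finrank k ↑(LinearMap.range A.mulVecLin ⊔ LinearMap.range B.mulVecLin) :=
        Submodule.finrank_mono hle
    _ ≤ _ := Submodule.finrank_add_le_finrank_add_finrank _ _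

lemma matrix_rank_sum_le {k : Type*} [Field k] {m n ι : Type*} [Fintype n] [Fintype m]
    (s : Finset ι) (M : ι → Matrix m n k) :
    (∑ i ∈ s, M i).rank ≤ ∑ i ∈ s, (M i).rank := by
  classical
  induction s using Finset.induction_on with
  | empty => simp [Matrix.rank_zero]
  | @insert a s ha ih =>
      rw [Finset.sum_insert ha, Finset.sum_insert ha]
      exact (matrix_rank_add_le _ _).trans (add_le_add_right ih _)

lemma my_finrank_span_finset_le_card {k : Type*} [Field k] {V : Type*} [AddCommGroup V]
    [Module k V] (G : Finset V) :
    Module.finrank k (Submodule.span k (G : Set V)) ≤ G.card :=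
  finrank_span_finset_le_card G

open Module Submodule in
set_option maxHeartbeats 1600000 in
lemma rank_psi_vecMulVec {k : Type*} [Field k] (d e j : ℕ) (u v : Fin d → k) (c : Fin e → k) :
    (psiMatrix d e (fun i => c i • Matrix.vecMulVec u v) j).rank ≤ Nat.choose (e - 1) j := by
  classical
  by_cases hc : c = 0
  · have hz : psiMatrix d e (fun i => c i • Matrix.vecMulVec u v) j = 0 := by
      ext qT pS
      simp [psiMatrix, hc]
    rw [hz, Matrix.rank_zero]
    exact Nat.zero_le _
  obtain ⟨i0, hi0⟩ : ∃ i0, c i0 ≠ 0 := by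
    by_contra hcon
    push_neg at hcon
    exact hc (funext hcon)
  set M := psiMatrix d e (fun i => c i • Matrix.vecMulVec u v) j with hM
  set W : Finset (Fin e) → (Fin d × {T : Finset (Fin e) // T.card = j + 1}) → k :=
    fun S qT => u qT.1 * wcol c S qT.2.1 with hW
  set s : Finset (Finset (Fin e)) := (Finset.univ.erase i0).powersetCard j with hs
  have hmem_s : ∀ S : Finset (Fin e), S.card = j → i0 ∉ S → S ∈ s := by
    intro S hcard hn
    rw [hs, Finset.mem_powersetCard]
    exact ⟨fun x hx => Finset.mem_erase.2 ⟨fun hxx => hn (hxx ▸ hx), Finset.mem_univ x⟩, hcard⟩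
  have hmemW : ∀ S : Finset (Fin e), S.card = j →
      W S ∈ Submodule.span k ((s.image W : Finset _) : Set _) := by
    intro S hcard
    by_cases hi0S : i0 ∈ S
    · have key : c i0 • W S = ∑ m ∈ Sᶜ,
          ((-1 : k) ^ fcount m S * (-1 : k) ^ fcount i0 (insert m (S.erase i0)) * c m)
            • W (insert m (S.erase i0)) := by
        funext qT
        simp only [Pi.smul_apply, smul_eq_mul, Finset.sum_apply, hW]
        calc c i0 * (u qT.1 * wcol c S qT.2.1)
            = u qT.1 * (c i0 * wcol c S qT.2.1) := by ring
          _ = u qT.1 * ∑ m ∈ Sᶜ, ((-1 : k) ^ fcount m S *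
                (-1 : k) ^ fcount i0 (insert m (S.erase i0)) * c m)
                  * wcol c (insert m (S.erase i0)) qT.2.1 := by
              rw [wcol_key c i0 S qT.2.1 hi0S]
          _ = _ := by
              rw [Finset.mul_sum]
              exact Finset.sum_congr rfl fun m _ => by ring
      have hWS : W S = (c i0)⁻¹ • (c i0 • W S) := by
        rw [smul_smul, inv_mul_cancel₀ hi0, one_smul]
      rw [hWS, key]
      refine Submodule.smul_mem _ _ (Submodule.sum_mem _ fun m hm => Submodule.smul_mem _ _ ?_)
      apply Submodule.subset_span
      refine Finset.mem_coe.2 (Finset.mem_image_of_mem W (hmem_s _ ?_ ?_))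
      · have hmS : m ∉ S := Finset.mem_compl.1 hm
        have hmE : m ∉ S.erase i0 := fun hcc => hmS (Finset.mem_of_mem_erase hcc)
        rw [Finset.card_insert_of_notMem hmE, Finset.card_erase_of_mem hi0S]
        have : 1 ≤ S.card := Finset.card_pos.2 ⟨i0, hi0S⟩
        omega
      · intro hmem
        rcases Finset.mem_insert.1 hmem with h' | h'
        · exact (Finset.mem_compl.1 hm) (h' ▸ hi0S)
        · exact (Finset.notMem_erase i0 S) h'
    · exact Submodule.subset_span
        (Finset.mem_coe.2 (Finset.mem_image_of_mem W (hmem_s S hcard hi0S)))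
  have hcol : ∀ pS, Mᵀ pS = v pS.1 • W pS.2.1 := by
    intro pS
    funext qT
    simp only [Matrix.transpose_apply, hM, psiMatrix, Matrix.of_apply, hW, wcol,
      Pi.smul_apply, smul_eq_mul, Finset.mul_sum]
    refine Finset.sum_congr rfl fun i _ => ?_
    split_ifs with hcnd
    · simp only [Matrix.smul_apply, Matrix.vecMulVec_apply, smul_eq_mul, fcount]
      ring
    · simp
  have h1 : M.rank = Module.finrank k (Submodule.span k (Set.range Mᵀ)) :=
    Matrix.rank_eq_finrank_span_cols M
  have h2 : Submodule.span k (Set.range Mᵀ) ≤ Submodule.span k ((s.image W : Finset _) : Set _) := by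
    rw [Submodule.span_le]
    rintro x ⟨pS, rfl⟩
    rw [hcol pS]
    exact Submodule.smul_mem _ _ (hmemW pS.2.1 pS.2.2)
  have h3 := Submodule.finrank_mono h2
  have h4 := finrank_span_finset_le_card (R := k) (s.image W)
  rw [Set.finrank] at h4
  have h5 : s.card = Nat.choose (e - 1) j := by
    rw [hs, Finset.card_powersetCard, Finset.card_erase_of_mem (Finset.mem_univ _),
      Finset.card_univ, Fintype.card_fin]
  calc M.rank ≤ (s.image W).card := by rw [h1]; exact h3.trans h4
    _ ≤ s.card := Finset.card_image_le
    _ = _ := h5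


/-- if the 3-tensor associated to the tuple `A` is a sum of `r` pure tensors,
i.e. `A_i = Σ_{α=1}^r c_{α,i} u_α v_αᵗ`, then `κ_j(A) ≤ r·C(e-1, j)`. -/
theorem kappa_le_of_tensor_rank {k : Type*} [Field k] (d e : ℕ) (hd : 1 ≤ d) (he : 1 ≤ e)
    (A : Fin e → Matrix (Fin d) (Fin d) k) (r : ℕ)
    (u v : Fin r → Fin d → k) (c : Fin r → Fin e → k)
    (hA : ∀ i, A i = ∑ α : Fin r, c α i • Matrix.vecMulVec (u α) (v α))
    (j : ℕ) (hj : j ≤ e - 1) :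
    kappa d e A j ≤ r * Nat.choose (e - 1) j := by
  classical
  have hsplit : psiMatrix d e A j =
      ∑ α : Fin r, psiMatrix d e (fun i => c α i • Matrix.vecMulVec (u α) (v α)) j := by
    ext qT pS
    simp only [Matrix.sum_apply, psiMatrix, Matrix.of_apply]
    rw [Finset.sum_comm]
    refine Finset.sum_congr rfl fun i _ => ?_
    rw [hA i]
    split_ifs with hcnd
    · rw [Matrix.sum_apply, Finset.mul_sum]
    · rw [Finset.sum_const_zero]
  unfold kappa
  rw [hsplit]
  calc (∑ α : Fin r, psiMatrix d e (fun i => c α i • Matrix.vecMulVec (u α) (v α)) j).rank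
      ≤ ∑ α : Fin r, (psiMatrix d e (fun i => c α i • Matrix.vecMulVec (u α) (v α)) j).rank :=
        matrix_rank_sum_le _ _
    _ ≤ ∑ _α : Fin r, Nat.choose (e - 1) j :=
        Finset.sum_le_sum fun α _ => rank_psi_vecMulVec d e j (u α) (v α) (c α)
    _ = r * Nat.choose (e - 1) j := by
        rw [Finset.sum_const, Finset.card_univ, Fintype.card_fin, smul_eq_mul]
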